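/- Let a, b, c ∈ ℂ with a ≠ 0, and suppose the two roots z₁, z₂ (with multiplicity) of P = aX² + bX + c satisfy |z₁| ≤ 1 and |z₂| ≤ 1, and if z₁ = z₂ then |z₁| < 1. Then the Hermitian form q_e on ℂ² defined by q_e(x₁,x₂) := 2|a|²|x₂|² + 2·Re( conj(a·x₂)·b·x₁ ) + (|a|²+|c|²)·|x₁|² is positive definite. -/

import Mathlib

/-- positive definiteness of the energy form `q_e` for a degree-2
polynomial `P = aX² + bX + c` whose roots `z₁, z₂` lie in the closed unit disk,
the double-root case being allowed only in the open disk. -/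
theorem stmt_9 (a b c z₁ z₂ : ℂ) (ha : a ≠ 0)
    (hb : a * (z₁ + z₂) = -b) (hc : a * z₁ * z₂ = c)
    (hz₁ : ‖z₁‖ ≤ 1) (hz₂ : ‖z₂‖ ≤ 1)
    (hdouble : z₁ = z₂ → ‖z₁‖ < 1) :
    ∀ x₁ x₂ : ℂ, ¬(x₁ = 0 ∧ x₂ = 0) →
      0 < 2 * ‖a‖ ^ 2 * ‖x₂‖ ^ 2
            + 2 * ((starRingEnd ℂ) (a * x₂) * (b * x₁)).re
            + (‖a‖ ^ 2 + ‖c‖ ^ 2) * ‖x₁‖ ^ 2 := by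
  intro x₁ x₂ hx
  have hb' : b = -(a * (z₁ + z₂)) := by linear_combination hb
  have hc' : c = a * z₁ * z₂ := hc.symm
  subst hb' hc'
  have key : 2 * ‖a‖ ^ 2 * ‖x₂‖ ^ 2
        + 2 * ((starRingEnd ℂ) (a * x₂) * (-(a * (z₁ + z₂)) * x₁)).re
        + (‖a‖ ^ 2 + ‖a * z₁ * z₂‖ ^ 2) * ‖x₁‖ ^ 2
      = Complex.normSq a * (Complex.normSq (x₂ - z₁ * x₁)
          + Complex.normSq (x₂ - z₂ * x₁)
          + (1 - Complex.normSq z₁) * (1 - Complex.normSq z₂) * Complex.normSq x₁) := by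
    simp only [map_mul, mul_pow, Complex.sq_norm, Complex.normSq_apply, Complex.mul_re,
      Complex.mul_im, Complex.neg_re, Complex.neg_im, Complex.add_re, Complex.add_im,
      Complex.sub_re, Complex.sub_im, Complex.conj_re, Complex.conj_im]
    ring
  rw [key]
  have hna : 0 < Complex.normSq a := Complex.normSq_pos.2 ha
  have h1 : Complex.normSq z₁ ≤ 1 := by
    rw [← Complex.sq_norm]; nlinarith [norm_nonneg z₁]
  have h2 : Complex.normSq z₂ ≤ 1 := by
    rw [← Complex.sq_norm]; nlinarith [norm_nonneg z₂]
  have hU : 0 ≤ (1 - Complex.normSq z₁) * (1 - Complex.normSq z₂) * Complex.normSq x₁ :=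
    mul_nonneg (mul_nonneg (by linarith) (by linarith)) (Complex.normSq_nonneg _)
  have hS : 0 ≤ Complex.normSq (x₂ - z₁ * x₁) := Complex.normSq_nonneg _
  have hT : 0 ≤ Complex.normSq (x₂ - z₂ * x₁) := Complex.normSq_nonneg _
  by_cases hx₁ : x₁ = 0
  · have hx₂ : x₂ ≠ 0 := fun h => hx ⟨hx₁, h⟩
    subst hx₁
    simp only [mul_zero, sub_zero, Complex.normSq_zero]
    nlinarith [Complex.normSq_pos.2 hx₂]
  · by_cases h12 : z₁ = z₂
    · have hlt := hdouble h12
      have h1' : Complex.normSq z₁ < 1 := by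
        rw [← Complex.sq_norm]; nlinarith [norm_nonneg z₁]
      have h2' : Complex.normSq z₂ < 1 := by
        rw [← Complex.sq_norm, ← h12]; nlinarith [norm_nonneg z₁]
      have hU' : 0 < (1 - Complex.normSq z₁) * (1 - Complex.normSq z₂) * Complex.normSq x₁ :=
        mul_pos (mul_pos (by linarith) (by linarith)) (Complex.normSq_pos.2 hx₁)
      nlinarith
    · by_cases hS0 : x₂ - z₁ * x₁ = 0
      · have hT0 : x₂ - z₂ * x₁ ≠ 0 := by
          intro h
          apply h12
          have : (z₁ - z₂) * x₁ = 0 := by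
            have := sub_eq_zero.mp hS0
            have := sub_eq_zero.mp h
            ring_nf
            linear_combination h - hS0
          rcases mul_eq_zero.mp this with h' | h'
          · exact sub_eq_zero.mp h'
          · exact absurd h' hx₁
        have := Complex.normSq_pos.2 hT0
        nlinarith
      · have := Complex.normSq_pos.2 hS0
        nlinarith
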